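/- (Pointwise/fiberwise form of Theorem 4.5: unimodular extensions.) Let 0 → c → g → b → 0 be an extension of finite-dimensional real Lie algebras, i.e. c is a Lie ideal of g, b = g/c, and Φ : g → b is the quotient homomorphism. Assume c is unimodular, that is, tr(ad_c k) = 0 for every k ∈ c. Then there exists a linear functional η : b → ℝ such that η(Φ X) = tr((ad_g X)|_c) for every X ∈ g (so the character of the adjoint action of g on the top exterior power of c descends to b), and the relative modular cocycle of Φ satisfies tr(ad_g X) − tr(ad_b(Φ X)) = η(Φ X) for all X ∈ g. -/

import Mathlib

open LinearMap Submodule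

lemma trace_eq_trace_restrict_add_trace_mapQ
    {V : Type*} [AddCommGroup V] [Module ℝ V] [Module.Finite ℝ V]
    (p : Submodule ℝ V) (f : V →ₗ[ℝ] V) (hf : ∀ x ∈ p, f x ∈ p) :
    trace ℝ V f =
      trace ℝ p (f.restrict hf) + trace ℝ (V ⧸ p) (p.mapQ p f hf) := by
  obtain ⟨q, hq⟩ := Submodule.exists_isCompl p
  let E : (p × (V ⧸ p)) ≃ₗ[ℝ] V :=
    ((LinearEquiv.refl ℝ p).prodCongr (Submodule.quotientEquivOfIsCompl p q hq)).trans
      (Submodule.prodEquivOfIsCompl p q hq)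
  have h1 : trace ℝ V f = trace ℝ (p × (V ⧸ p)) (E.symm.conj f) := (trace_conj' f E.symm).symm
  set gg : (p × (V ⧸ p)) →ₗ[ℝ] (p × (V ⧸ p)) := E.symm.conj f with hgg
  have hgg_apply : ∀ z, gg z = E.symm (f (E z)) := by
    intro z; simp [hgg, LinearEquiv.conj_apply]
  have hdecomp : gg =
      (inl ℝ p (V ⧸ p)) ∘ₗ ((fst ℝ p (V ⧸ p)) ∘ₗ gg) +
      (inr ℝ p (V ⧸ p)) ∘ₗ ((snd ℝ p (V ⧸ p)) ∘ₗ gg) := by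
    ext x <;> simp
  have h2 : trace ℝ _ gg =
      trace ℝ p (((fst ℝ p (V ⧸ p)) ∘ₗ gg) ∘ₗ inl ℝ p (V ⧸ p)) +
      trace ℝ (V ⧸ p) (((snd ℝ p (V ⧸ p)) ∘ₗ gg) ∘ₗ inr ℝ p (V ⧸ p)) := by
    conv_lhs => rw [hdecomp]
    rw [map_add, trace_comp_comm' _ (inl ℝ p (V ⧸ p)), trace_comp_comm' _ (inr ℝ p (V ⧸ p))]
  have hEsymm : ∀ v : V, E.symm v =
      (((prodEquivOfIsCompl p q hq).symm v).1,
        (quotientEquivOfIsCompl p q hq).symm ((prodEquivOfIsCompl p q hq).symm v).2) := by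
    intro v; rfl
  have hL : ((fst ℝ p (V ⧸ p)) ∘ₗ gg) ∘ₗ inl ℝ p (V ⧸ p) = f.restrict hf := by
    refine LinearMap.ext fun x => ?_
    simp only [coe_comp, Function.comp_apply, coe_inl, restrict_apply, hgg_apply]
    have hx : E ((x : p), (0 : V ⧸ p)) = (x : V) := by
      simp [E]
    rw [hx, hEsymm]
    have hfx : (prodEquivOfIsCompl p q hq).symm (f (x : V)) = ((⟨f x, hf _ x.2⟩ : p), 0) :=
      prodEquivOfIsCompl_symm_apply_left p q hq (⟨f x, hf _ x.2⟩ : p)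
    rw [hfx]
    rfl
  have h3 : ∀ v : V,
      (Submodule.Quotient.mk ((((prodEquivOfIsCompl p q hq).symm v).2 : q) : V) : V ⧸ p)
        = Submodule.Quotient.mk v := by
    intro v
    rw [Submodule.Quotient.eq]
    have h4 := (prodEquivOfIsCompl p q hq).apply_symm_apply v
    rw [coe_prodEquivOfIsCompl'] at h4
    obtain ⟨w, hw⟩ : ∃ w, (prodEquivOfIsCompl p q hq).symm v = w := ⟨_, rfl⟩
    rw [hw] at h4 ⊢
    have h5 : ((w.2 : q) : V) - v = -((w.1 : p) : V) := by rw [← h4]; abel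
    rw [h5]
    exact neg_mem (Submodule.coe_mem _)
  have key : ∀ yq : V ⧸ p,
      (LinearMap.snd ℝ p (V ⧸ p)) (gg (0, yq)) = p.mapQ p f hf yq := by
    intro yq
    rw [hgg_apply]
    have hy : E ((0 : p), yq) = ((quotientEquivOfIsCompl p q hq yq : q) : V) := by
      simp [E]
    rw [hy, hEsymm]
    show (quotientEquivOfIsCompl p q hq).symm
        ((prodEquivOfIsCompl p q hq).symm (f (((quotientEquivOfIsCompl p q hq yq : q) : V)))).2
        = p.mapQ p f hf yq
    rw [quotientEquivOfIsCompl_symm_apply]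
    have h7 : yq =
        (Submodule.Quotient.mk (((quotientEquivOfIsCompl p q hq yq : q) : V)) : V ⧸ p) :=
      (mk_quotientEquivOfIsCompl_apply hq yq).symm
    conv_rhs => rw [h7, Submodule.mapQ_apply]
    exact h3 _
  have hR : ((snd ℝ p (V ⧸ p)) ∘ₗ gg) ∘ₗ inr ℝ p (V ⧸ p) = p.mapQ p f hf :=
    LinearMap.ext fun yq => key yq
  rw [h1, h2, hL, hR]


/-- Pointwise form of Theorem 4.5 (unimodular extensions): for an extension
`0 → c → g → b → 0` of finite-dimensional real Lie algebras with `c` unimodular and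
`b = g ⧸ c`, the character `X ↦ tr ((ad_g X)|_c)` descends to a linear functional `η` on `b`,
and the relative modular cocycle of the projection `Φ` equals `η ∘ Φ`. -/
theorem unimodular_extension_relative_modular_cocycle
    (g : Type*) [LieRing g] [LieAlgebra ℝ g] [Module.Finite ℝ g]
    (c : LieIdeal ℝ g)
    (hc : ∀ k : c, LinearMap.trace ℝ c (LieAlgebra.ad ℝ c k) = 0) :
    ∃ η : (g ⧸ c) →ₗ[ℝ] ℝ,
      (∀ X : g, η (LieSubmodule.Quotient.mk' c X) =
        LinearMap.trace ℝ (c : Submodule ℝ g)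
          ((LieAlgebra.ad ℝ g X).restrict
            (fun y hy => by simpa using c.lie_mem hy :
              ∀ y ∈ (c : Submodule ℝ g),
                (LieAlgebra.ad ℝ g X) y ∈ (c : Submodule ℝ g)))) ∧
      (∀ X : g,
        LinearMap.trace ℝ g (LieAlgebra.ad ℝ g X) -
          LinearMap.trace ℝ (g ⧸ c)
            (LieAlgebra.ad ℝ (g ⧸ c) (LieSubmodule.Quotient.mk' c X)) =
        η (LieSubmodule.Quotient.mk' c X)) := by
  classical
  have hmem : ∀ X : g, ∀ y ∈ (c : Submodule ℝ g),
      (LieAlgebra.ad ℝ g X) y ∈ (c : Submodule ℝ g) := fun X y hy => by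
    simpa using c.lie_mem hy
  let θ : g →ₗ[ℝ] ℝ :=
    { toFun := fun X => trace ℝ (c : Submodule ℝ g)
        ((LieAlgebra.ad ℝ g X).restrict (hmem X))
      map_add' := by
        intro X Y
        have h : (LieAlgebra.ad ℝ g (X + Y)).restrict (hmem (X + Y)) =
            (LieAlgebra.ad ℝ g X).restrict (hmem X) +
            (LieAlgebra.ad ℝ g Y).restrict (hmem Y) := by
          refine LinearMap.ext fun z => Subtype.ext ?_
          show ⁅X + Y, (z : g)⁆ = ⁅X, (z : g)⁆ + ⁅Y, (z : g)⁆
          exact add_lie _ _ _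
        simp only [h]
        simp only [map_add]
      map_smul' := by
        intro r X
        have h : (LieAlgebra.ad ℝ g (r • X)).restrict (hmem (r • X)) =
            r • (LieAlgebra.ad ℝ g X).restrict (hmem X) := by
          refine LinearMap.ext fun z => Subtype.ext ?_
          show ⁅r • X, (z : g)⁆ = r • ⁅X, (z : g)⁆
          exact smul_lie _ _ _
        simp only [h]
        simp only [map_smul]
        rfl }
  have hθc : ∀ X ∈ (c : Submodule ℝ g), θ X = 0 := by
    intro X hX
    have h : (LieAlgebra.ad ℝ g X).restrict (hmem X) = LieAlgebra.ad ℝ c ⟨X, hX⟩ := by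
      refine LinearMap.ext fun z => Subtype.ext ?_
      simp only [LinearMap.restrict_apply, LieAlgebra.ad_apply]
      rfl
    show trace ℝ (c : Submodule ℝ g) ((LieAlgebra.ad ℝ g X).restrict (hmem X)) = 0
    rw [h]
    exact hc ⟨X, hX⟩
  let η : (g ⧸ c) →ₗ[ℝ] ℝ :=
    Submodule.liftQ (c : Submodule ℝ g) θ (fun X hX => hθc X hX)
  have hη : ∀ X : g, η (LieSubmodule.Quotient.mk' c X) = θ X := fun X => rfl
  refine ⟨η, fun X => hη X, fun X => ?_⟩
  have hQ : (c : Submodule ℝ g).mapQ (c : Submodule ℝ g) (LieAlgebra.ad ℝ g X) (hmem X) =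
      LieAlgebra.ad ℝ (g ⧸ c) (LieSubmodule.Quotient.mk' c X) := by
    apply Submodule.linearMap_qext
    refine LinearMap.ext fun y => ?_
    rfl
  have key := trace_eq_trace_restrict_add_trace_mapQ (c : Submodule ℝ g)
    (LieAlgebra.ad ℝ g X) (hmem X)
  rw [hQ] at key
  have key' : trace ℝ g (LieAlgebra.ad ℝ g X)
      = θ X + trace ℝ (g ⧸ c) (LieAlgebra.ad ℝ (g ⧸ c) (LieSubmodule.Quotient.mk' c X)) := key
  rw [key', hη]
  ring
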